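/- arXiv:1401.7908 — 2 statements merged into one kernel-verified Lean document; each statement's English description precedes it below -/
import Mathlib

section
/- Fix n ≥ 1 and let x_k := cos((2k−1)π/(2n)), k = 1, …, n, be the Chebyshev nodes in [−1,1]. Let l_k denote the Lagrange fundamental polynomials for these nodes and L_n f(x) := ∑_{k=1}^n f(x_k) l_k(x). Then for all f, g : [−1,1] → ℝ and all x ∈ [−1,1], |L_n(f·g)(x) − L_n f(x)·L_n g(x)| ≤ osc_{L_n}(f)·osc_{L_n}(g)·∑_{1 ≤ k < m ≤ n} |l_k(x)·l_m(x)|, where osc_{L_n}(f) := max{|f(x_k) − f(x_m)| : 1 ≤ k < m ≤ n} and similarly for g. -/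
/-- The `k`-th Chebyshev node for `n` nodes: `cos((2k-1)π/(2n))`. -/
noncomputable def chebNode (n k : ℕ) : ℝ :=
  Real.cos ((2 * k - 1) * Real.pi / (2 * n))

/-- Lagrange fundamental polynomial at the Chebyshev nodes (nodes indexed `1, …, n`). -/
noncomputable def lagBasis (n k : ℕ) (t : ℝ) : ℝ :=
  ∏ m ∈ (Finset.Icc 1 n).erase k, (t - chebNode n m) / (chebNode n k - chebNode n m)

lemma chebNode_injOn (n : ℕ) (hn : 1 ≤ n) :
    Set.InjOn (chebNode n) (Finset.Icc 1 n) := by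
  intro k hk m hm h
  simp only [Finset.coe_Icc, Set.mem_Icc] at hk hm
  have hnR : (1:ℝ) ≤ n := by exact_mod_cast hn
  have hθ : ∀ j : ℕ, 1 ≤ j → j ≤ n →
      (2 * (j:ℝ) - 1) * Real.pi / (2 * n) ∈ Set.Icc 0 Real.pi := by
    intro j h1 h2
    have h1R : (1:ℝ) ≤ j := by exact_mod_cast h1
    have h2R : (j:ℝ) ≤ n := by exact_mod_cast h2
    constructor
    · apply div_nonneg
      · nlinarith [Real.pi_pos]
      · positivity
    · rw [div_le_iff₀ (by positivity)]
      nlinarith [Real.pi_pos]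
  have h2 := Real.injOn_cos (hθ k hk.1 hk.2) (hθ m hm.1 hm.2) h
  rw [div_left_inj' (ne_of_gt (by linarith)), mul_left_inj' Real.pi_ne_zero] at h2
  have h3 : (k:ℝ) = m := by linarith
  exact_mod_cast h3

lemma lagBasis_eq (n k : ℕ) (x : ℝ) :
    lagBasis n k x = (Lagrange.basis (Finset.Icc 1 n) (chebNode n) k).eval x := by
  rw [Lagrange.basis, Polynomial.eval_prod, lagBasis]
  refine Finset.prod_congr rfl fun m _ => ?_
  rw [Lagrange.basisDivisor]
  simp [div_eq_inv_mul, mul_comm]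

lemma sum_lagBasis (n : ℕ) (hn : 1 ≤ n) (x : ℝ) :
    ∑ k ∈ Finset.Icc 1 n, lagBasis n k x = 1 := by
  simp_rw [lagBasis_eq]
  rw [← Polynomial.eval_finset_sum,
    Lagrange.sum_basis (chebNode_injOn n hn) ⟨1, by simp [hn]⟩, Polynomial.eval_one]

lemma gruss_identity (S : Finset ℕ) (a b l : ℕ → ℝ) (hl : ∑ k ∈ S, l k = 1) :
    ∑ k ∈ S, a k * b k * l k - (∑ k ∈ S, a k * l k) * (∑ k ∈ S, b k * l k)
    = ∑ p ∈ (S ×ˢ S).filter (fun p => p.1 < p.2),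
        (a p.1 - a p.2) * (b p.1 - b p.2) * (l p.1 * l p.2) := by
  have h1 : ∑ k ∈ S, a k * b k * l k - (∑ k ∈ S, a k * l k) * (∑ k ∈ S, b k * l k)
      = ∑ p ∈ S ×ˢ S, a p.1 * (b p.1 - b p.2) * (l p.1 * l p.2) := by
    have e1 : ∑ k ∈ S, a k * b k * l k
        = (∑ k ∈ S, a k * b k * l k) * (∑ m ∈ S, l m) := by rw [hl, mul_one]
    rw [e1, Finset.sum_mul_sum, Finset.sum_mul_sum, Finset.sum_product,
      ← Finset.sum_sub_distrib]
    refine Finset.sum_congr rfl fun k _ => ?_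
    rw [← Finset.sum_sub_distrib]
    exact Finset.sum_congr rfl fun m _ => by ring
  rw [h1, ← Finset.sum_filter_add_sum_filter_not (S ×ˢ S) (fun p => p.1 < p.2)]
  have h2 : ∑ p ∈ (S ×ˢ S).filter (fun p => ¬ p.1 < p.2),
      a p.1 * (b p.1 - b p.2) * (l p.1 * l p.2)
      = ∑ p ∈ (S ×ˢ S).filter (fun p => p.1 ≤ p.2),
        a p.2 * (b p.2 - b p.1) * (l p.1 * l p.2) := by
    refine Finset.sum_nbij' (fun p => Prod.swap p) (fun p => Prod.swap p) ?_ ?_ ?_ ?_ ?_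
    · intro p hp
      simp only [Finset.mem_filter, Finset.mem_product, not_lt] at hp ⊢
      exact ⟨⟨hp.1.2, hp.1.1⟩, hp.2⟩
    · intro p hp
      simp only [Finset.mem_filter, Finset.mem_product, not_lt] at hp ⊢
      exact ⟨⟨hp.1.2, hp.1.1⟩, hp.2⟩
    · intro p _; simp
    · intro p _; simp
    · intro p _; simp [mul_comm]
  rw [h2]
  have h3 : (S ×ˢ S).filter (fun p => p.1 ≤ p.2)
      = (S ×ˢ S).filter (fun p => p.1 < p.2) ∪ (S ×ˢ S).filter (fun p => p.1 = p.2) := by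
    rw [← Finset.filter_or]
    exact Finset.filter_congr fun p _ => by omega
  rw [h3, Finset.sum_union]
  · have h4 : ∑ p ∈ (S ×ˢ S).filter (fun p => p.1 = p.2),
        a p.2 * (b p.2 - b p.1) * (l p.1 * l p.2) = 0 := by
      refine Finset.sum_eq_zero fun p hp => ?_
      simp only [Finset.mem_filter] at hp
      rw [hp.2]; ring
    rw [h4, add_zero, ← Finset.sum_add_distrib]
    exact Finset.sum_congr rfl fun p _ => by ring
  · rw [Finset.disjoint_filter]
    intro p _ h; omega

/-- The Lagrange interpolation operator at the Chebyshev nodes. -/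
noncomputable def lagOp (n : ℕ) (f : ℝ → ℝ) (t : ℝ) : ℝ :=
  ∑ k ∈ Finset.Icc 1 n, f (chebNode n k) * lagBasis n k t

/-- The new Chebyshev-Grüss-type inequality for Lagrange interpolation at Chebyshev nodes,
with discrete oscillations over the nodes. -/
theorem lagrange_chebyshev_gruss_osc (n : ℕ) (hn : 1 ≤ n)
    (f g : ℝ → ℝ) (x : ℝ) (hx : x ∈ Set.Icc (-1:ℝ) 1) :
    |lagOp n (fun t => f t * g t) x - lagOp n f x * lagOp n g x| ≤
      sSup {d : ℝ | ∃ k m : ℕ, 1 ≤ k ∧ k < m ∧ m ≤ n ∧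
          d = |f (chebNode n k) - f (chebNode n m)|} *
      sSup {d : ℝ | ∃ k m : ℕ, 1 ≤ k ∧ k < m ∧ m ≤ n ∧
          d = |g (chebNode n k) - g (chebNode n m)|} *
      ∑ p ∈ (Finset.Icc 1 n ×ˢ Finset.Icc 1 n).filter (fun p => p.1 < p.2),
        |lagBasis n p.1 x * lagBasis n p.2 x| := by
  set P := (Finset.Icc 1 n ×ˢ Finset.Icc 1 n).filter (fun p => p.1 < p.2) with hP
  have hset : ∀ h : ℝ → ℝ,
      {d : ℝ | ∃ k m : ℕ, 1 ≤ k ∧ k < m ∧ m ≤ n ∧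
          d = |h (chebNode n k) - h (chebNode n m)|}
      = ↑(P.image (fun p => |h (chebNode n p.1) - h (chebNode n p.2)|)) := by
    intro h
    ext d
    simp only [Set.mem_setOf_eq, Finset.coe_image, Set.mem_image, Finset.mem_coe,
      hP, Finset.mem_filter, Finset.mem_product, Finset.mem_Icc]
    constructor
    · rintro ⟨k, m, h1, h2, h3, rfl⟩
      exact ⟨(k, m), ⟨⟨⟨h1, by omega⟩, ⟨by omega, h3⟩⟩, h2⟩, rfl⟩
    · rintro ⟨⟨k, m⟩, ⟨⟨⟨h1, _⟩, ⟨_, h3⟩⟩, h2⟩, rfl⟩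
      exact ⟨k, m, h1, h2, h3, rfl⟩
  have key := gruss_identity (Finset.Icc 1 n) (fun k => f (chebNode n k))
    (fun k => g (chebNode n k)) (fun k => lagBasis n k x) (sum_lagBasis n hn x)
  have hLHS : lagOp n (fun t => f t * g t) x - lagOp n f x * lagOp n g x
      = ∑ p ∈ P, (f (chebNode n p.1) - f (chebNode n p.2)) *
          (g (chebNode n p.1) - g (chebNode n p.2)) *
          (lagBasis n p.1 x * lagBasis n p.2 x) := by
    simpa only [lagOp] using key
  rw [hLHS, hset f, hset g]
  rcases P.eq_empty_or_nonempty with hPe | ⟨p0, hp0⟩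
  · rw [hPe]; simp only [Finset.sum_empty, abs_zero, mul_zero, le_refl]
  · set A := sSup ((P.image (fun p => |f (chebNode n p.1) - f (chebNode n p.2)|) : Finset ℝ) : Set ℝ) with hA
    set B := sSup ((P.image (fun p => |g (chebNode n p.1) - g (chebNode n p.2)|) : Finset ℝ) : Set ℝ) with hB
    have hAle : ∀ p ∈ P, |f (chebNode n p.1) - f (chebNode n p.2)| ≤ A :=
      fun p hp => le_csSup (Finset.bddAbove _)
        (Finset.mem_coe.mpr (Finset.mem_image_of_mem _ hp))
    have hBle : ∀ p ∈ P, |g (chebNode n p.1) - g (chebNode n p.2)| ≤ B :=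
      fun p hp => le_csSup (Finset.bddAbove _)
        (Finset.mem_coe.mpr (Finset.mem_image_of_mem _ hp))
    have hA0 : 0 ≤ A := le_trans (abs_nonneg _) (hAle p0 hp0)
    have hB0 : 0 ≤ B := le_trans (abs_nonneg _) (hBle p0 hp0)
    calc |∑ p ∈ P, (f (chebNode n p.1) - f (chebNode n p.2)) *
            (g (chebNode n p.1) - g (chebNode n p.2)) *
            (lagBasis n p.1 x * lagBasis n p.2 x)|
        ≤ ∑ p ∈ P, |(f (chebNode n p.1) - f (chebNode n p.2)) *
            (g (chebNode n p.1) - g (chebNode n p.2)) *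
            (lagBasis n p.1 x * lagBasis n p.2 x)| := Finset.abs_sum_le_sum_abs _ _
      _ ≤ ∑ p ∈ P, A * B * |lagBasis n p.1 x * lagBasis n p.2 x| := by
          refine Finset.sum_le_sum fun p hp => ?_
          rw [abs_mul, abs_mul]
          exact mul_le_mul_of_nonneg_right
            (mul_le_mul (hAle p hp) (hBle p hp) (abs_nonneg _) hA0) (abs_nonneg _)
      _ = A * B * ∑ p ∈ P, |lagBasis n p.1 x * lagBasis n p.2 x| := by
          rw [Finset.mul_sum]
end

section
/- Let n ≥ 1 and let S_{Δ_n} denote piecewise linear interpolation at the equidistant knots 0, 1/n, …, 1: for x ∈ [(k−1)/n, k/n] with 1 ≤ k ≤ n, S_{Δ_n} f(x) = (k − nx)·f((k−1)/n) + (nx − k + 1)·f(k/n). Then for all f, g : [0,1] → ℝ and all x ∈ [0,1], |S_{Δ_n}(f·g)(x) − S_{Δ_n} f(x)·S_{Δ_n} g(x)| ≤ (1/4)·osc_{S_{Δ_n}}(f)·osc_{S_{Δ_n}}(g), where osc_{S_{Δ_n}}(f) := max{|f(k/n) − f(l/n)| : 0 ≤ k < l ≤ n} and similarly for g. -/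
lemma osc_bdd (n : ℕ) (f : ℝ → ℝ) :
    BddAbove {d : ℝ | ∃ k l : ℕ, k < l ∧ l ≤ n ∧ d = |f (k / n) - f (l / n)|} := by
  have hfin : Set.Finite ((fun p : ℕ × ℕ => |f (p.1 / (n:ℝ)) - f (p.2 / n)|) ''
      (Set.Iic n ×ˢ Set.Iic n)) :=
    ((Set.finite_Iic n).prod (Set.finite_Iic n)).image _
  apply BddAbove.mono _ hfin.bddAbove
  rintro d ⟨k, l, hkl, hln, rfl⟩
  exact ⟨(k, l), ⟨le_of_lt (lt_of_lt_of_le hkl hln), hln⟩, rfl⟩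

/-- The new Chebyshev-Grüss-type inequality for piecewise linear interpolation `S_{Δ_n}`
at equidistant knots `0, 1/n, …, 1`: the operator is characterized by its value
`S f x = (k - nx) f((k-1)/n) + (nx - k + 1) f(k/n)` on each subinterval `[(k-1)/n, k/n]`. -/
theorem piecewise_linear_chebyshev_gruss (n : ℕ) (hn : 1 ≤ n)
    (S : (ℝ → ℝ) → ℝ → ℝ)
    (hS : ∀ (f : ℝ → ℝ) (k : ℕ), 1 ≤ k → k ≤ n →
      ∀ x ∈ Set.Icc (((k : ℝ) - 1) / n) ((k : ℝ) / n),
        S f x = ((k : ℝ) - n * x) * f (((k : ℝ) - 1) / n)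
              + ((n : ℝ) * x - k + 1) * f ((k : ℝ) / n))
    (f g : ℝ → ℝ) (x : ℝ) (hx : x ∈ Set.Icc (0:ℝ) 1) :
    |S (fun t => f t * g t) x - S f x * S g x| ≤
      (1 / 4) *
        sSup {d : ℝ | ∃ k l : ℕ, k < l ∧ l ≤ n ∧ d = |f (k / n) - f (l / n)|} *
        sSup {d : ℝ | ∃ k l : ℕ, k < l ∧ l ≤ n ∧ d = |g (k / n) - g (l / n)|} := by
  obtain ⟨hx0, hx1⟩ := hx
  have hn0 : (0:ℝ) < n := by exact_mod_cast hn
  have hnx0 : (0:ℝ) ≤ n * x := by positivity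
  set k : ℕ := max 1 ⌈(n:ℝ) * x⌉₊ with hk
  have hk1 : 1 ≤ k := le_max_left _ _
  have hkn : k ≤ n := max_le hn (Nat.ceil_le.mpr (by nlinarith))
  have hxb : (n:ℝ) * x ≤ k := by
    have h1 : (n:ℝ) * x ≤ ⌈(n:ℝ) * x⌉₊ := Nat.le_ceil _
    have h2 : (⌈(n:ℝ) * x⌉₊ : ℝ) ≤ k := by exact_mod_cast le_max_right 1 _
    linarith
  have hxa : (k:ℝ) - 1 ≤ n * x := by
    rcases max_cases 1 ⌈(n:ℝ) * x⌉₊ with ⟨h, _⟩ | ⟨h, _⟩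
    · rw [hk, h]; push_cast; linarith
    · rw [hk, h]
      have := Nat.ceil_lt_add_one hnx0
      linarith
  have hmem : x ∈ Set.Icc (((k:ℝ) - 1) / n) ((k:ℝ) / n) := by
    constructor
    · rw [div_le_iff₀ hn0]; linarith
    · rw [le_div_iff₀ hn0]; linarith
  set a := ((k:ℝ) - 1) / n
  set b := (k:ℝ) / n
  have key : S (fun t => f t * g t) x - S f x * S g x =
      ((k:ℝ) - n * x) * ((n:ℝ) * x - k + 1) * ((f a - f b) * (g a - g b)) := by
    rw [hS (fun t => f t * g t) k hk1 hkn x hmem, hS f k hk1 hkn x hmem,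
      hS g k hk1 hkn x hmem]
    ring
  have hmu : (0:ℝ) ≤ (k:ℝ) - n * x := by linarith
  have hlam : (0:ℝ) ≤ (n:ℝ) * x - k + 1 := by linarith
  have hmulam : ((k:ℝ) - n * x) * ((n:ℝ) * x - k + 1) ≤ 1/4 := by nlinarith [sq_nonneg (((k:ℝ) - n * x) - ((n:ℝ) * x - k + 1))]
  have h1 : |S (fun t => f t * g t) x - S f x * S g x| ≤
      1/4 * (|f a - f b| * |g a - g b|) := by
    rw [key, abs_mul, abs_mul, abs_mul, abs_of_nonneg hmu, abs_of_nonneg hlam]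
    nlinarith [mul_nonneg (abs_nonneg (f a - f b)) (abs_nonneg (g a - g b)), hmulam, mul_nonneg hmu hlam]
  set Mf := sSup {d : ℝ | ∃ k l : ℕ, k < l ∧ l ≤ n ∧ d = |f (k / n) - f (l / n)|} with hMf
  set Mg := sSup {d : ℝ | ∃ k l : ℕ, k < l ∧ l ≤ n ∧ d = |g (k / n) - g (l / n)|} with hMg
  have hcast : ((k - 1 : ℕ) : ℝ) = (k:ℝ) - 1 := by
    push_cast [Nat.cast_sub hk1]; ring
  have hfa : |f a - f b| ≤ Mf := by
    apply le_csSup (osc_bdd n f)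
    exact ⟨k - 1, k, by omega, hkn, by rw [hcast]⟩
  have hga : |g a - g b| ≤ Mg := by
    apply le_csSup (osc_bdd n g)
    exact ⟨k - 1, k, by omega, hkn, by rw [hcast]⟩
  have hMf0 : 0 ≤ Mf := le_trans (abs_nonneg _) hfa
  have hprod : |f a - f b| * |g a - g b| ≤ Mf * Mg :=
    mul_le_mul hfa hga (abs_nonneg _) hMf0
  calc |S (fun t => f t * g t) x - S f x * S g x|
      ≤ 1/4 * (|f a - f b| * |g a - g b|) := h1
    _ ≤ 1/4 * (Mf * Mg) := by linarith
    _ = 1/4 * Mf * Mg := by ring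
end
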